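/- Let 1 ≤ p₁ < q < ∞ and v, w ∈ ℕ with v/w < q/p₁ and v > w. Let x be the sequence with x_j = 1 iff j ∈ {0,1} ∪ ⋃_{n≥1} S_n, where S_n = {1 + 2^v + ⋯ + 2^{(n−1)v} + j·2^{nw} : j = 1, …, 2^{n(v−w)}}. Then ‖x‖*_{ℓ^{p₁}_q} ≤ max(1 + 2^{v−w}, 2^{(1+v−w)/p₁}) < ∞, so x ∈ ℓ^{p₁}_q. -/

import Mathlib

open scoped ENNReal BigOperators

/-- Discrete Morrey norm over symmetric index sets `S_{m,N} = {m-N, …, m+N}`. -/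
noncomputable def dnorm (p q : ℝ) (x : ℤ → ℝ) : ℝ≥0∞ :=
  ⨆ (m : ℤ) (N : ℕ), ((2 * N + 1 : ℝ≥0∞) ^ (1 / q - 1 / p)) *
    ENNReal.ofReal ((∑ j ∈ Finset.Icc (m - N) (m + N), |x j| ^ p) ^ (1 / p))

/-- Discrete Morrey norm over arbitrary index intervals `S*_{k,n} = {k, …, k+n}`. -/
noncomputable def dnormStar (p q : ℝ) (x : ℤ → ℝ) : ℝ≥0∞ :=
  ⨆ (k : ℤ) (n : ℕ), ((n + 1 : ℝ≥0∞) ^ (1 / q - 1 / p)) *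
    ENNReal.ofReal ((∑ j ∈ Finset.Icc k (k + n), |x j| ^ p) ^ (1 / p))

/-- Morrey norm on the real line. -/
noncomputable def mnormR (p q : ℝ) (f : ℝ → ℝ) : ℝ≥0∞ :=
  ⨆ (a : ℝ) (r : Set.Ioi (0 : ℝ)),
    ENNReal.ofReal ((2 * r.1) ^ (1 / q - 1 / p) *
      (∫ t in (a - r.1)..(a + r.1), |f t| ^ p) ^ (1 / p))

/-- The step function `x̃(t) = ∑_j x_j χ_{[j,j+1)}(t)`, i.e. `x̃(t) = x ⌊t⌋`. -/
noncomputable def step (x : ℤ → ℝ) : ℝ → ℝ := fun t => x ⌊t⌋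

/-- The set `S_n = {1 + 2^v + ⋯ + 2^{(n-1)v} + j·2^{nw} : j = 1, …, 2^{n(v-w)}}`. -/
def Sn (v w n : ℕ) : Set ℤ :=
  {m | ∃ j : ℕ, 1 ≤ j ∧ j ≤ 2 ^ (n * (v - w)) ∧
    m = ((∑ i ∈ Finset.range n, 2 ^ (i * v) : ℕ) : ℤ) + (j : ℤ) * 2 ^ (n * w)}

/-- The sequence with `x_j = 1` iff `j ∈ {0,1} ∪ ⋃_{n≥1} S_n`, `x_j = 0` otherwise. -/
noncomputable def xseq (v w : ℕ) : ℤ → ℝ :=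
  Set.indicator (({0, 1} : Set ℤ) ∪ ⋃ n ∈ Set.Ici 1, Sn v w n) 1

/-- `β_n = 1 + 2^v + ⋯ + 2^{nv}`. -/
def beta (v n : ℕ) : ℕ := ∑ i ∈ Finset.range (n + 1), 2 ^ (i * v)


open scoped Classical

namespace Stmt11Aux

def cseq (v n : ℕ) : ℤ := ((∑ i ∈ Finset.range n, 2 ^ (i * v) : ℕ) : ℤ)

lemma cseq_succ (v n : ℕ) : cseq v (n + 1) = cseq v n + 2 ^ (n * v) := by
  simp only [cseq, Finset.sum_range_succ]
  push_cast
  ring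

lemma cseq_mono (v : ℕ) {m m' : ℕ} (h : m ≤ m') : cseq v m ≤ cseq v m' := by
  unfold cseq
  have := Finset.sum_le_sum_of_subset (f := fun i => 2 ^ (i * v))
    (Finset.range_subset_range.mpr h)
  exact_mod_cast this

lemma Sn_bounds (v w : ℕ) (hvw : w ≤ v) {n : ℕ} {x : ℤ} (hx : x ∈ Sn v w n) :
    cseq v n + 2 ^ (n * w) ≤ x ∧ x ≤ cseq v (n + 1) := by
  obtain ⟨j, hj1, hj2, rfl⟩ := hx
  have hg : (0:ℤ) < 2 ^ (n * w) := by positivity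
  rw [show ((∑ i ∈ Finset.range n, 2 ^ (i * v) : ℕ) : ℤ) = cseq v n from rfl]
  constructor
  · have : (1:ℤ) ≤ (j:ℤ) := by exact_mod_cast hj1
    nlinarith
  · rw [cseq_succ]
    have h1 : (j:ℤ) * 2 ^ (n * w) ≤ 2 ^ (n * (v - w)) * 2 ^ (n * w) := by
      have : (j:ℤ) ≤ 2 ^ (n * (v - w)) := by exact_mod_cast hj2
      nlinarith
    have h2 : (2:ℤ) ^ (n * (v - w)) * 2 ^ (n * w) = 2 ^ (n * v) := by
      rw [← pow_add]
      congr 1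
      rw [← Nat.mul_add, Nat.sub_add_cancel hvw]
    linarith [h1, h2.le, h2.ge]

lemma Sn_sep (v w : ℕ) (hvw : w ≤ v) {m m' : ℕ} (h : m + 2 ≤ m') {x y : ℤ}
    (hx : x ∈ Sn v w m) (hy : y ∈ Sn v w m') : (2:ℤ) ^ ((m + 1) * v) ≤ y - x := by
  have hxu := (Sn_bounds v w hvw hx).2
  have hyl := (Sn_bounds v w hvw hy).1
  have h1 : cseq v (m + 2) ≤ cseq v m' := cseq_mono v h
  have h2 : cseq v (m + 2) = cseq v (m + 1) + 2 ^ ((m + 1) * v) := cseq_succ v (m + 1)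
  have hg : (0:ℤ) < 2 ^ (m' * w) := by positivity
  linarith


/-- Number of points of `Sn` in an interval `[a,b]`. -/
lemma count_Sn_le (v w m : ℕ) (a b : ℤ) :
    ((Finset.Icc a b).filter (· ∈ Sn v w m)).card ≤ (b - a).toNat / 2 ^ (m * w) + 1 := by
  set F := (Finset.Icc a b).filter (· ∈ Sn v w m) with hF
  rcases F.eq_empty_or_nonempty with h | h
  · simp [h]
  · set g : ℤ := 2 ^ (m * w) with hg
    have hg0 : (0:ℤ) < g := by positivity
    set x₀ := F.min' h with hx₀
    have hx₀F : x₀ ∈ F := F.min'_mem h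
    have hx₀I : x₀ ∈ Finset.Icc a b := (Finset.mem_filter.mp hx₀F).1
    obtain ⟨j₀, hj₀1, hj₀2, hx₀e⟩ := (Finset.mem_filter.mp hx₀F).2
    have hab : a ≤ b := by
      have := Finset.mem_Icc.mp hx₀I; linarith [this.1, this.2]
    set d : ℕ := (b - a).toNat / 2 ^ (m * w) with hd
    have hsub : F ⊆ (Finset.Icc (j₀:ℤ) ((j₀:ℤ) + d)).image
        (fun j => ((∑ i ∈ Finset.range m, 2 ^ (i * v) : ℕ) : ℤ) + j * g) := by
      intro x hxF
      have hxI := (Finset.mem_filter.mp hxF).1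
      obtain ⟨j, hj1, hj2, hxe⟩ := (Finset.mem_filter.mp hxF).2
      have hxmin : x₀ ≤ x := F.min'_le x hxF
      have hjge : (j₀:ℤ) ≤ (j:ℤ) := by
        rw [hxe, hx₀e] at hxmin
        have := le_of_mul_le_mul_right (by linarith : (j₀:ℤ) * g ≤ (j:ℤ) * g) hg0
        exact this
      have hdiff : ((j:ℤ) - j₀) * g ≤ b - a := by
        have h1 : x ≤ b := (Finset.mem_Icc.mp hxI).2
        have h2 : a ≤ x₀ := (Finset.mem_Icc.mp hx₀I).1
        have : x - x₀ ≤ b - a := by linarith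
        rw [hxe, hx₀e] at this
        linarith [this]
      have hjle : (j:ℤ) ≤ (j₀:ℤ) + d := by
        have hj₀j : j₀ ≤ j := by exact_mod_cast hjge
        have ht : ((j - j₀ : ℕ) : ℤ) * g ≤ b - a := by
          rw [Nat.cast_sub hj₀j]; linarith
        have ht2 : (j - j₀) * 2 ^ (m * w) ≤ (b - a).toNat := by
          refine (Int.le_toNat (by linarith : (0:ℤ) ≤ b - a)).mpr ?_
          push_cast
          push_cast at ht
          linarith
        have := (Nat.le_div_iff_mul_le (by positivity)).mpr ht2
        have : ((j - j₀ : ℕ) : ℤ) ≤ (d : ℤ) := by exact_mod_cast this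
        rw [Nat.cast_sub hj₀j] at this
        linarith
      exact Finset.mem_image.mpr ⟨(j:ℤ), Finset.mem_Icc.mpr ⟨hjge, hjle⟩, hxe.symm⟩
    calc F.card ≤ _ := Finset.card_le_card hsub
      _ ≤ (Finset.Icc (j₀:ℤ) ((j₀:ℤ) + d)).card := Finset.card_image_le
      _ = d + 1 := by
          rw [Int.card_Icc, show (j₀:ℤ) + d + 1 - j₀ = ((d + 1 : ℕ) : ℤ) by push_cast; ring,
            Int.toNat_natCast]

/-- Total size of a level. -/
lemma count_Sn_full (v w m : ℕ) (s : Finset ℤ) :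
    (s.filter (· ∈ Sn v w m)).card ≤ 2 ^ (m * (v - w)) := by
  have hsub : s.filter (· ∈ Sn v w m) ⊆ (Finset.Icc (1:ℤ) (2 ^ (m * (v - w)))).image
      (fun j => ((∑ i ∈ Finset.range m, 2 ^ (i * v) : ℕ) : ℤ) + j * 2 ^ (m * w)) := by
    intro x hx
    obtain ⟨j, hj1, hj2, hxe⟩ := (Finset.mem_filter.mp hx).2
    refine Finset.mem_image.mpr ⟨(j:ℤ), Finset.mem_Icc.mpr ⟨by exact_mod_cast hj1, by exact_mod_cast hj2⟩, hxe.symm⟩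
  calc (s.filter (· ∈ Sn v w m)).card ≤ _ := Finset.card_le_card hsub
    _ ≤ (Finset.Icc (1:ℤ) (2 ^ (m * (v - w)))).card := Finset.card_image_le
    _ = 2 ^ (m * (v - w)) := by
        rw [Int.card_Icc]
        have : ((2:ℤ) ^ (m * (v-w)) + 1 - 1) = ((2 ^ (m * (v-w)) : ℕ) : ℤ) := by push_cast; ring
        rw [this, Int.toNat_natCast]

/-- Geometric sum bound. -/
lemma geo (a : ℕ) (ha : 1 ≤ a) : ∀ T : ℕ, (∑ m ∈ Finset.Icc 1 T, 2 ^ (m * a)) + 2 ≤ 2 ^ (T * a + 1)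
  | 0 => by simp
  | (T + 1) => by
    rw [Finset.sum_Icc_succ_top (by omega)]
    have h1 := geo a ha T
    have h2 : 2 ^ (T * a + 1) ≤ 2 ^ ((T + 1) * a) := by
      apply Nat.pow_le_pow_right (by norm_num)
      have : (T + 1) * a = T * a + a := by ring
      omega
    have h3 : 2 ^ ((T+1) * a) + 2 ^ ((T+1) * a) = 2 ^ ((T+1) * a + 1) := by ring
    omega


set_option maxHeartbeats 1000000 in
lemma main_count (v w : ℕ) (hw : 0 < w) (hvw : w < v) (k : ℤ) (n : ℕ) :
    ((((Finset.Icc k (k + n)).filter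
        (· ∈ (({0, 1} : Set ℤ) ∪ ⋃ m ∈ Set.Ici 1, Sn v w m))).card : ℝ))
      ≤ 2 ^ (1 + v - w) * ((n : ℝ) + 1) ^ (((v:ℝ) - w) / v) := by
  have hv1 : 1 ≤ v := hw.trans_le hvw.le
  have hv0 : (0:ℝ) < v := by exact_mod_cast hv1
  have hwvR : (w:ℝ) < v := by exact_mod_cast hvw
  set e : ℝ := ((v:ℝ) - w) / v with he
  have he0 : 0 ≤ e := div_nonneg (by linarith) hv0.le
  have hvw1 : 1 ≤ v - w := by omega
  have hK4 : (4:ℝ) ≤ 2 ^ (1 + v - w) := by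
    calc (4:ℝ) = 2 ^ 2 := by norm_num
    _ ≤ 2 ^ (1 + v - w) := pow_le_pow_right₀ one_le_two (by omega)
  set I := Finset.Icc k (k + (n:ℤ)) with hI
  set BU : Set ℤ := ⋃ m ∈ Set.Ici 1, Sn v w m with hBU
  have h01card : (I.filter (· ∈ ({0, 1} : Set ℤ))).card ≤ 2 := by
    have hsub : I.filter (· ∈ ({0, 1} : Set ℤ)) ⊆ ({0, 1} : Finset ℤ) := by
      intro x hx
      have := (Finset.mem_filter.mp hx).2
      simp only [Set.mem_insert_iff, Set.mem_singleton_iff] at this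
      simp only [Finset.mem_insert, Finset.mem_singleton]
      exact this
    calc (I.filter (· ∈ ({0, 1} : Set ℤ))).card ≤ ({0, 1} : Finset ℤ).card :=
          Finset.card_le_card hsub
      _ ≤ 2 := Finset.card_insert_le 0 {1}
  have hsplit : (I.filter (· ∈ (({0, 1} : Set ℤ) ∪ BU))).card
      ≤ 2 + (I.filter (· ∈ BU)).card := by
    have hsub : I.filter (· ∈ (({0, 1} : Set ℤ) ∪ BU))
        ⊆ I.filter (· ∈ ({0, 1} : Set ℤ)) ∪ I.filter (· ∈ BU) := by
      intro x hx
      rw [Finset.mem_filter] at hx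
      rw [Finset.mem_union, Finset.mem_filter, Finset.mem_filter]
      rcases hx.2 with h | h
      · exact Or.inl ⟨hx.1, h⟩
      · exact Or.inr ⟨hx.1, h⟩
    calc (I.filter (· ∈ (({0, 1} : Set ℤ) ∪ BU))).card
        ≤ _ := Finset.card_le_card hsub
      _ ≤ _ := Finset.card_union_le _ _
      _ ≤ 2 + (I.filter (· ∈ BU)).card := by
          exact Nat.add_le_add_right h01card _
  rcases Nat.eq_zero_or_pos n with hn | hn
  · subst hn
    have hcard : (I.filter (· ∈ (({0, 1} : Set ℤ) ∪ BU))).card ≤ 1 := by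
      calc (I.filter (· ∈ (({0, 1} : Set ℤ) ∪ BU))).card ≤ I.card :=
            Finset.card_le_card (Finset.filter_subset _ _)
        _ = 1 := by simp [hI]
    have h1 : (((Finset.Icc k (k + (0:ℕ))).filter
        (· ∈ (({0, 1} : Set ℤ) ∪ BU))).card : ℝ) ≤ 1 := by exact_mod_cast hcard
    rw [show ((0:ℕ):ℝ) + 1 = 1 by norm_num, Real.one_rpow]
    calc _ ≤ (1:ℝ) := h1
      _ ≤ 2 ^ (1 + v - w) * 1 := by nlinarith
  -- main case: 1 ≤ n
  have hn1 : (1:ℝ) ≤ (n:ℝ) := by exact_mod_cast hn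
  set T := Nat.log (2 ^ v) n with hT
  have hb2 : 1 < 2 ^ v := Nat.one_lt_two_pow (by omega)
  have hT1 : 2 ^ (v * T) ≤ n := by
    have := Nat.pow_log_le_self (2 ^ v) (by omega : n ≠ 0)
    rwa [← pow_mul] at this
  have hT2 : n < 2 ^ (v * (T + 1)) := by
    have := Nat.lt_pow_succ_log_self hb2 n
    rwa [← pow_mul] at this
  set E : ℝ := (n:ℝ) ^ e with hE
  have hE0 : 0 < E := Real.rpow_pos_of_pos (by linarith) e
  have hE1 : 1 ≤ E := Real.one_le_rpow hn1 he0
  have hElow : (2:ℝ) ^ (T * (v - w)) ≤ E := by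
    have h1 : ((2:ℝ) ^ (v * T)) ≤ (n:ℝ) := by exact_mod_cast hT1
    have h2 : ((2:ℝ) ^ (v * T)) ^ e ≤ (n:ℝ) ^ e :=
      Real.rpow_le_rpow (by positivity) h1 he0
    calc (2:ℝ) ^ (T * (v - w)) = ((2:ℝ) ^ (v * T)) ^ e := by
          rw [← Real.rpow_natCast 2 (v * T), ← Real.rpow_mul (by norm_num),
            ← Real.rpow_natCast 2 (T * (v - w))]
          congr 1
          rw [Nat.cast_mul, Nat.cast_mul, Nat.cast_sub hvw.le, he]
          field_simp
      _ ≤ E := h2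
  have hEdiv : ∀ m : ℕ, T + 1 ≤ m → (n:ℝ) / 2 ^ (m * w) ≤ E := by
    intro m hm
    have h1 : (n:ℝ) / 2 ^ (m * w) ≤ (n:ℝ) / 2 ^ ((T + 1) * w) := by
      apply div_le_div_of_nonneg_left (by linarith) (by positivity)
      exact pow_le_pow_right₀ one_le_two (Nat.mul_le_mul_right w hm)
    have h2 : (n:ℝ) ^ ((w:ℝ) / v) ≤ 2 ^ ((T + 1) * w) := by
      have hle : (n:ℝ) ≤ 2 ^ (v * (T + 1)) := by exact_mod_cast hT2.le
      have h3 := Real.rpow_le_rpow (n.cast_nonneg) hle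
        (by positivity : (0:ℝ) ≤ (w:ℝ) / v)
      calc (n:ℝ) ^ ((w:ℝ) / v) ≤ ((2:ℝ) ^ (v * (T + 1))) ^ ((w:ℝ) / v) := h3
        _ = 2 ^ ((T + 1) * w) := by
            rw [← Real.rpow_natCast 2 (v * (T + 1)), ← Real.rpow_mul (by norm_num),
              ← Real.rpow_natCast 2 ((T + 1) * w)]
            congr 1
            push_cast
            field_simp
    have h4 : (n:ℝ) = E * (n:ℝ) ^ ((w:ℝ) / v) := by
      rw [hE, ← Real.rpow_add (by linarith : (0:ℝ) < (n:ℝ))]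
      rw [show e + (w:ℝ) / v = 1 by rw [he]; field_simp; ring, Real.rpow_one]
    calc (n:ℝ) / 2 ^ (m * w) ≤ (n:ℝ) / 2 ^ ((T + 1) * w) := h1
      _ = E * ((n:ℝ) ^ ((w:ℝ) / v) / 2 ^ ((T + 1) * w)) := by rw [mul_div_assoc', ← h4]
      _ ≤ E * 1 := by
          apply mul_le_mul_of_nonneg_left _ hE0.le
          exact (div_le_one (by positivity)).mpr h2
      _ = E := mul_one E
  -- interval length fact
  have hIlen : ((k + (n:ℤ)) - k).toNat = n := by simp
  -- low part
  set LowP : ℤ → Prop := fun x => ∃ m : ℕ, 1 ≤ m ∧ m ≤ T ∧ x ∈ Sn v w m with hLowP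
  have hLowCard : (I.filter LowP).card + 2 ≤ 2 ^ (T * (v - w) + 1) := by
    have hsub : I.filter LowP ⊆ (Finset.Icc 1 T).biUnion
        (fun m => I.filter (· ∈ Sn v w m)) := by
      intro x hx
      obtain ⟨m, h1, h2, h3⟩ := (Finset.mem_filter.mp hx).2
      exact Finset.mem_biUnion.mpr ⟨m, Finset.mem_Icc.mpr ⟨h1, h2⟩,
        Finset.mem_filter.mpr ⟨(Finset.mem_filter.mp hx).1, h3⟩⟩
    have h1 : (I.filter LowP).card ≤ ∑ m ∈ Finset.Icc 1 T, 2 ^ (m * (v - w)) := by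
      calc (I.filter LowP).card ≤ _ := Finset.card_le_card hsub
        _ ≤ ∑ m ∈ Finset.Icc 1 T, (I.filter (· ∈ Sn v w m)).card :=
            Finset.card_biUnion_le
        _ ≤ ∑ m ∈ Finset.Icc 1 T, 2 ^ (m * (v - w)) :=
            Finset.sum_le_sum fun m _ => count_Sn_full v w m I
    have := geo (v - w) hvw1 T
    omega
  -- high part
  set HighP : ℤ → Prop := fun x => ∃ m : ℕ, T + 1 ≤ m ∧ x ∈ Sn v w m with hHighP
  have hHighCard : ((I.filter HighP).card : ℝ) ≤ 2 * E ∨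
      ((I.filter HighP).card : ℝ) ≤ E + 1 := by
    by_cases hH : ∃ m : ℕ, T + 1 ≤ m ∧ ∃ x ∈ I, x ∈ Sn v w m
    · set m₀ := Nat.find hH with hm₀
      obtain ⟨hm₀T, x₁, hx₁I, hx₁S⟩ := Nat.find_spec hH
      -- every high element lives in level m₀ or m₀ + 1
      have hlev : ∀ x ∈ I, ∀ m : ℕ, T + 1 ≤ m → x ∈ Sn v w m →
          m = m₀ ∨ m = m₀ + 1 := by
        intro x hxI m hm hxS
        have hge : m₀ ≤ m := Nat.find_min' hH ⟨hm, x, hxI, hxS⟩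
        by_contra hcon
        have h2 : m₀ + 2 ≤ m := by omega
        have hsep := Sn_sep v w hvw.le h2 hx₁S hxS
        have hxk : x ≤ k + n := (Finset.mem_Icc.mp hxI).2
        have hx₁k : k ≤ x₁ := (Finset.mem_Icc.mp hx₁I).1
        have hpow : (2:ℤ) ^ (v * (T + 1)) ≤ 2 ^ ((m₀ + 1) * v) := by
          apply pow_le_pow_right₀ one_le_two
          calc v * (T + 1) = (T + 1) * v := mul_comm _ _
            _ ≤ (m₀ + 1) * v := Nat.mul_le_mul_right v (by omega)
        have hnZ : (n:ℤ) < 2 ^ (v * (T + 1)) := by exact_mod_cast hT2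
        linarith
      have hsub : I.filter HighP ⊆
          I.filter (· ∈ Sn v w m₀) ∪ I.filter (· ∈ Sn v w (m₀ + 1)) := by
        intro x hx
        have hxI := (Finset.mem_filter.mp hx).1
        obtain ⟨m, hm, hxS⟩ := (Finset.mem_filter.mp hx).2
        rcases hlev x hxI m hm hxS with rfl | rfl
        · exact Finset.mem_union_left _ (Finset.mem_filter.mpr ⟨hxI, hxS⟩)
        · exact Finset.mem_union_right _ (Finset.mem_filter.mpr ⟨hxI, hxS⟩)
      have hcards : (I.filter HighP).card ≤
          (I.filter (· ∈ Sn v w m₀)).card + (I.filter (· ∈ Sn v w (m₀ + 1))).card :=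
        le_trans (Finset.card_le_card hsub) (Finset.card_union_le _ _)
      -- generic one-level bound
      have honelevel : ∀ m : ℕ, T + 1 ≤ m →
          ((I.filter (· ∈ Sn v w m)).card : ℝ) ≤ E + 1 := by
        intro m hm
        have h1 := count_Sn_le v w m k (k + n)
        rw [hIlen] at h1
        have h2 : ((I.filter (· ∈ Sn v w m)).card : ℝ) ≤ (n / 2 ^ (m * w) : ℕ) + 1 := by
          exact_mod_cast h1
        calc ((I.filter (· ∈ Sn v w m)).card : ℝ) ≤ (n / 2 ^ (m * w) : ℕ) + 1 := h2
          _ ≤ (n:ℝ) / 2 ^ (m * w) + 1 := by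
              have := Nat.cast_div_le (α := ℝ) (m := n) (n := 2 ^ (m * w))
              push_cast at this ⊢
              linarith
          _ ≤ E + 1 := by linarith [hEdiv m hm]
      rcases (I.filter (· ∈ Sn v w (m₀ + 1))).eq_empty_or_nonempty with hne | hne
      · right
        have : (I.filter HighP).card ≤ (I.filter (· ∈ Sn v w m₀)).card := by
          rw [hne] at hcards; simpa using hcards
        calc ((I.filter HighP).card : ℝ) ≤ _ := by exact_mod_cast this
          _ ≤ E + 1 := honelevel m₀ hm₀T
      · -- two levels
        obtain ⟨y, hy⟩ := hne
        have hyI := (Finset.mem_filter.mp hy).1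
        have hyS := (Finset.mem_filter.mp hy).2
        rcases (I.filter (· ∈ Sn v w m₀)).eq_empty_or_nonempty with hne0 | hne0
        · right
          have : (I.filter HighP).card ≤ (I.filter (· ∈ Sn v w (m₀ + 1))).card := by
            rw [hne0] at hcards; simpa using hcards
          calc ((I.filter HighP).card : ℝ) ≤ _ := by exact_mod_cast this
            _ ≤ E + 1 := honelevel (m₀ + 1) (by omega)
        · left
          obtain ⟨z, hz⟩ := hne0
          have hzI := (Finset.mem_filter.mp hz).1
          have hzS := (Finset.mem_filter.mp hz).2
          -- refined bound for level m₀
          have hkc : k ≤ cseq v (m₀ + 1) := by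
            have := (Sn_bounds v w hvw.le hzS).2
            have hzk : k ≤ z := (Finset.mem_Icc.mp hzI).1
            linarith
          have hsubr : I.filter (· ∈ Sn v w m₀) ⊆
              (Finset.Icc k (cseq v (m₀ + 1))).filter (· ∈ Sn v w m₀) := by
            intro x hx
            have hxI := (Finset.mem_filter.mp hx).1
            have hxS := (Finset.mem_filter.mp hx).2
            refine Finset.mem_filter.mpr ⟨Finset.mem_Icc.mpr
              ⟨(Finset.mem_Icc.mp hxI).1, (Sn_bounds v w hvw.le hxS).2⟩, hxS⟩
          have hc1N : (I.filter (· ∈ Sn v w m₀)).card ≤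
              (cseq v (m₀ + 1) - k).toNat / 2 ^ (m₀ * w) + 1 :=
            le_trans (Finset.card_le_card hsubr) (count_Sn_le v w m₀ k _)
          -- the gap to level m₀+1
          have hygap : cseq v (m₀ + 1) + 2 ^ ((m₀ + 1) * w) ≤ y :=
            (Sn_bounds v w hvw.le hyS).1
          have hyk : y ≤ k + n := (Finset.mem_Icc.mp hyI).2
          have hsZ : cseq v (m₀ + 1) - k ≤ (n:ℤ) - 2 ^ ((m₀ + 1) * w) := by linarith
          have hs0 : (0:ℤ) ≤ cseq v (m₀ + 1) - k := by linarith
          have hcast : (((cseq v (m₀ + 1) - k).toNat : ℝ)) ≤ (n:ℝ) - 2 ^ ((m₀ + 1) * w) := by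
            have h1 : (((cseq v (m₀ + 1) - k).toNat : ℤ) : ℝ) ≤ (((n:ℤ) - 2 ^ ((m₀ + 1) * w) : ℤ) : ℝ) := by
              exact_mod_cast (Int.toNat_of_nonneg hs0).le.trans hsZ
            push_cast at h1
            exact_mod_cast h1
          have hc1R : ((I.filter (· ∈ Sn v w m₀)).card : ℝ) ≤ E - 1 := by
            have h2 : ((I.filter (· ∈ Sn v w m₀)).card : ℝ) ≤
                ((cseq v (m₀ + 1) - k).toNat / 2 ^ (m₀ * w) : ℕ) + 1 := by exact_mod_cast hc1N
            have h3 : (((cseq v (m₀ + 1) - k).toNat / 2 ^ (m₀ * w) : ℕ) : ℝ) ≤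
                (((cseq v (m₀ + 1) - k).toNat : ℝ)) / 2 ^ (m₀ * w) := by
              have := Nat.cast_div_le (α := ℝ) (m := (cseq v (m₀ + 1) - k).toNat)
                (n := 2 ^ (m₀ * w))
              push_cast at this ⊢
              linarith
            have hpw : ((2:ℝ) ^ ((m₀ + 1) * w)) / 2 ^ (m₀ * w) = 2 ^ w := by
              rw [show (m₀ + 1) * w = m₀ * w + w by ring, pow_add]
              field_simp
            have hw2 : (2:ℝ) ≤ 2 ^ w := by
              calc (2:ℝ) = 2 ^ 1 := (pow_one 2).symm
                _ ≤ 2 ^ w := pow_le_pow_right₀ one_le_two hw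
            have h4 : (((cseq v (m₀ + 1) - k).toNat : ℝ)) / 2 ^ (m₀ * w) ≤
                (n:ℝ) / 2 ^ (m₀ * w) - 2 ^ w := by
              rw [← hpw]
              calc (((cseq v (m₀ + 1) - k).toNat : ℝ)) / 2 ^ (m₀ * w)
                  ≤ ((n:ℝ) - 2 ^ ((m₀ + 1) * w)) / 2 ^ (m₀ * w) := by gcongr
                _ = (n:ℝ) / 2 ^ (m₀ * w) - 2 ^ ((m₀ + 1) * w) / 2 ^ (m₀ * w) :=
                    sub_div _ _ _
            have h5 := hEdiv m₀ hm₀T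
            linarith
          have hc2R := honelevel (m₀ + 1) (by omega)
          have : ((I.filter HighP).card : ℝ) ≤
              ((I.filter (· ∈ Sn v w m₀)).card : ℝ) +
              ((I.filter (· ∈ Sn v w (m₀ + 1))).card : ℝ) := by exact_mod_cast hcards
          linarith
    · right
      have : I.filter HighP = ∅ := by
        rw [Finset.filter_eq_empty_iff]
        intro x hxI hxH
        obtain ⟨m, hm, hxS⟩ := hxH
        exact hH ⟨m, hm, x, hxI, hxS⟩
      rw [this]
      simp
      linarith
  -- combine everything
  have hBUcard : (I.filter (· ∈ BU)).card ≤ (I.filter LowP).card + (I.filter HighP).card := by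
    have hsub : I.filter (· ∈ BU) ⊆ I.filter LowP ∪ I.filter HighP := by
      intro x hx
      have hxI := (Finset.mem_filter.mp hx).1
      have hxB := (Finset.mem_filter.mp hx).2
      rw [hBU] at hxB
      simp only [Set.mem_iUnion, Set.mem_Ici] at hxB
      obtain ⟨m, hm1, hmS⟩ := hxB
      rcases le_or_gt m T with hmT | hmT
      · exact Finset.mem_union_left _ (Finset.mem_filter.mpr ⟨hxI, m, hm1, hmT, hmS⟩)
      · exact Finset.mem_union_right _ (Finset.mem_filter.mpr ⟨hxI, m, by omega, hmS⟩)
    exact le_trans (Finset.card_le_card hsub) (Finset.card_union_le _ _)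
  have hLowR : ((I.filter LowP).card : ℝ) ≤ 2 * E - 2 := by
    have h1 : ((I.filter LowP).card : ℝ) + 2 ≤ (2:ℝ) ^ (T * (v - w) + 1) := by
      exact_mod_cast hLowCard
    have h2 : (2:ℝ) ^ (T * (v - w) + 1) = 2 * 2 ^ (T * (v - w)) := by
      rw [pow_succ]; ring
    linarith [hElow]
  have hHighR : ((I.filter HighP).card : ℝ) ≤ 2 * E := by
    rcases hHighCard with h | h
    · exact h
    · linarith
  have htot : ((I.filter (· ∈ (({0, 1} : Set ℤ) ∪ BU))).card : ℝ) ≤ 4 * E := by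
    have h1 : ((I.filter (· ∈ (({0, 1} : Set ℤ) ∪ BU))).card : ℝ) ≤
        2 + ((I.filter (· ∈ BU)).card : ℝ) := by exact_mod_cast hsplit
    have h2 : ((I.filter (· ∈ BU)).card : ℝ) ≤
        ((I.filter LowP).card : ℝ) + ((I.filter HighP).card : ℝ) := by
      exact_mod_cast hBUcard
    linarith
  have hfin : (4:ℝ) * E ≤ 2 ^ (1 + v - w) * ((n:ℝ) + 1) ^ e := by
    have h1 : E ≤ ((n:ℝ) + 1) ^ e :=
      Real.rpow_le_rpow (n.cast_nonneg) (by linarith) he0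
    have h2 : (0:ℝ) < ((n:ℝ) + 1) ^ e := Real.rpow_pos_of_pos (by linarith) e
    nlinarith
  exact htot.trans hfin


end Stmt11Aux

theorem stmt11 (p₁ q : ℝ) (hp₁ : 1 ≤ p₁) (h1q : p₁ < q)
    (v w : ℕ) (hw : 0 < w) (hvw : w < v) (h₂ : (v : ℝ) / w < q / p₁) :
    dnormStar p₁ q (xseq v w)
        ≤ ENNReal.ofReal (max ((1 : ℝ) + 2 ^ ((v : ℝ) - w)) ((2 : ℝ) ^ ((1 + (v : ℝ) - w) / p₁))) ∧
      dnormStar p₁ q (xseq v w) ≠ ⊤ := by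
  have hp0 : (0:ℝ) < p₁ := by linarith
  have hq0 : (0:ℝ) < q := by linarith
  have hv1 : 1 ≤ v := hw.trans_le hvw.le
  have hv0 : (0:ℝ) < v := by exact_mod_cast hv1
  have hw0 : (0:ℝ) < w := by exact_mod_cast hw
  have hwvR : (w:ℝ) < v := by exact_mod_cast hvw
  set A : Set ℤ := ({0, 1} : Set ℤ) ∪ ⋃ n ∈ Set.Ici 1, Sn v w n with hA
  set e : ℝ := ((v:ℝ) - w) / v with he
  have he0 : 0 ≤ e := div_nonneg (by linarith) hv0.le
  set M : ℝ := max ((1 : ℝ) + 2 ^ ((v : ℝ) - w)) ((2 : ℝ) ^ ((1 + (v : ℝ) - w) / p₁)) with hM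
  -- exponent inequality
  have hexp : 1 / q - 1 / p₁ + e / p₁ ≤ 0 := by
    have h2' : (v:ℝ) * p₁ < q * w := by
      rw [div_lt_div_iff₀ hw0 hp0] at h₂
      linarith
    have heq : 1 / q - 1 / p₁ + e / p₁ = 1 / q - (w:ℝ) / (v * p₁) := by
      rw [he]; field_simp; ring
    rw [heq, sub_nonpos, div_le_div_iff₀ hq0 (by positivity)]
    nlinarith
  -- the key real bound for each k n
  have key : ∀ (k : ℤ) (n : ℕ),
      ((n:ℝ) + 1) ^ (1 / q - 1 / p₁) *
        ((((Finset.Icc k (k + (n:ℤ))).filter (· ∈ A)).card : ℝ)) ^ (1 / p₁) ≤ M := by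
    intro k n
    set C : ℝ := (((Finset.Icc k (k + (n:ℤ))).filter (· ∈ A)).card : ℝ) with hC
    have hC0 : 0 ≤ C := Nat.cast_nonneg _
    have hn1 : (1:ℝ) ≤ (n:ℝ) + 1 := by have : (0:ℝ) ≤ (n:ℝ) := n.cast_nonneg; linarith
    set K : ℝ := (2:ℝ) ^ (1 + v - w) with hK
    have hK1 : 1 ≤ K := one_le_pow₀ one_le_two
    have h1 : C ≤ K * ((n:ℝ) + 1) ^ e := Stmt11Aux.main_count v w hw hvw k n
    have h2 : C ^ (1 / p₁) ≤ K ^ (1 / p₁) * ((n:ℝ) + 1) ^ (e / p₁) := by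
      calc C ^ (1 / p₁) ≤ (K * ((n:ℝ) + 1) ^ e) ^ (1 / p₁) :=
            Real.rpow_le_rpow hC0 h1 (by positivity)
        _ = K ^ (1 / p₁) * (((n:ℝ) + 1) ^ e) ^ (1 / p₁) :=
            Real.mul_rpow (by positivity) (by positivity)
        _ = K ^ (1 / p₁) * ((n:ℝ) + 1) ^ (e / p₁) := by
            rw [← Real.rpow_mul (by positivity : (0:ℝ) ≤ (n:ℝ) + 1), mul_one_div]
    have hKp : K ^ (1 / p₁ : ℝ) = (2:ℝ) ^ ((1 + (v:ℝ) - w) / p₁) := by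
      rw [hK, ← Real.rpow_natCast 2 (1 + v - w), ← Real.rpow_mul (by norm_num)]
      congr 1
      rw [Nat.cast_sub (by omega : w ≤ 1 + v)]
      push_cast
      rw [mul_one_div]
    calc ((n:ℝ) + 1) ^ (1 / q - 1 / p₁) * C ^ (1 / p₁)
        ≤ ((n:ℝ) + 1) ^ (1 / q - 1 / p₁) * (K ^ (1 / p₁) * ((n:ℝ) + 1) ^ (e / p₁)) :=
          mul_le_mul_of_nonneg_left h2 (Real.rpow_nonneg (by positivity) _)
      _ = K ^ (1 / p₁) * (((n:ℝ) + 1) ^ (1 / q - 1 / p₁) * ((n:ℝ) + 1) ^ (e / p₁)) := by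
          ring
      _ = K ^ (1 / p₁) * ((n:ℝ) + 1) ^ (1 / q - 1 / p₁ + e / p₁) := by
          rw [← Real.rpow_add (by positivity : (0:ℝ) < (n:ℝ) + 1)]
      _ ≤ K ^ (1 / p₁) * 1 := by
          apply mul_le_mul_of_nonneg_left _ (Real.rpow_nonneg (by positivity) _)
          exact Real.rpow_le_one_of_one_le_of_nonpos hn1 hexp
      _ = K ^ (1 / p₁ : ℝ) := mul_one _
      _ = (2:ℝ) ^ ((1 + (v:ℝ) - w) / p₁) := hKp
      _ ≤ M := le_max_right _ _
  -- sum evaluates to cardinality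
  have hsum : ∀ (k : ℤ) (n : ℕ), (∑ j ∈ Finset.Icc k (k + (n:ℤ)), |xseq v w j| ^ p₁)
      = (((Finset.Icc k (k + (n:ℤ))).filter (· ∈ A)).card : ℝ) := by
    intro k n
    have hterm : ∀ j : ℤ, |xseq v w j| ^ p₁ = if j ∈ A then (1:ℝ) else 0 := by
      intro j
      by_cases hj : j ∈ A
      · rw [if_pos hj]
        have : xseq v w j = 1 := by
          rw [xseq, Set.indicator_of_mem hj]
          rfl
        rw [this, abs_one, Real.one_rpow]
      · rw [if_neg hj]
        have : xseq v w j = 0 := by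
          rw [xseq, Set.indicator_of_notMem hj]
        rw [this, abs_zero, Real.zero_rpow (by linarith : p₁ ≠ 0)]
    rw [Finset.sum_congr rfl fun j _ => hterm j, Finset.sum_boole]
  -- ENNReal wrap-up
  have hmain : dnormStar p₁ q (xseq v w) ≤ ENNReal.ofReal M := by
    rw [dnormStar]
    refine iSup_le fun k => iSup_le fun n => ?_
    rw [hsum k n]
    have hofn : ((n:ℝ≥0∞) + 1) = ENNReal.ofReal ((n:ℝ) + 1) := by
      rw [ENNReal.ofReal_add (n.cast_nonneg) zero_le_one, ENNReal.ofReal_natCast,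
        ENNReal.ofReal_one]
    rw [hofn, ENNReal.ofReal_rpow_of_pos (by positivity),
      ← ENNReal.ofReal_mul (by positivity)]
    exact ENNReal.ofReal_le_ofReal (key k n)
  exact ⟨hmain, ne_top_of_le_ne_top ENNReal.ofReal_ne_top hmain⟩
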